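/- Schur's theorem: if the centre of a group G has finite index in G, then the commutator subgroup of G is finite. -/

import Mathlib

/-- Schur's theorem: if the centre has finite index, the commutator subgroup is finite. -/
theorem schur_commutator_finite (G : Type*) [Group G]
    (h : (Subgroup.center G).index ≠ 0) :
    Finite (commutator G) := by
  haveI : (Subgroup.center G).FiniteIndex := ⟨h⟩
  haveI : Finite (G ⧸ Subgroup.center G) :=
    Subgroup.finite_quotient_of_finiteIndex
  open scoped commutatorElement in
  have key : ∀ g₁ g₂ h₁ h₂ : G,
      (g₁ : G ⧸ Subgroup.center G) = g₂ → (h₁ : G ⧸ Subgroup.center G) = h₂ →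
      ⁅g₁, h₁⁆ = ⁅g₂, h₂⁆ := by
    intro g₁ g₂ h₁ h₂ hg hh
    rw [QuotientGroup.eq] at hg hh
    obtain ⟨z, hz, hz'⟩ : ∃ z ∈ Subgroup.center G, g₂ = g₁ * z :=
      ⟨g₁⁻¹ * g₂, hg, by group⟩
    obtain ⟨w, hw, hw'⟩ : ∃ w ∈ Subgroup.center G, h₂ = h₁ * w :=
      ⟨h₁⁻¹ * h₂, hh, by group⟩
    rw [Subgroup.mem_center_iff] at hz hw
    subst hz' hw'
    symm
    simp only [commutatorElement_def, mul_inv_rev]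
    calc g₁ * z * (h₁ * w) * (z⁻¹ * g₁⁻¹) * (w⁻¹ * h₁⁻¹)
        = g₁ * (z * (h₁ * w * z⁻¹)) * g₁⁻¹ * (w⁻¹ * h₁⁻¹) := by group
      _ = g₁ * (h₁ * w * z⁻¹ * z) * g₁⁻¹ * (w⁻¹ * h₁⁻¹) := by rw [hz]
      _ = g₁ * h₁ * (w * g₁⁻¹ * w⁻¹) * h₁⁻¹ := by group
      _ = g₁ * h₁ * (g₁⁻¹ * w * w⁻¹) * h₁⁻¹ := by rw [hw]
      _ = g₁ * h₁ * g₁⁻¹ * h₁⁻¹ := by group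
  open scoped commutatorElement in
  let f : (G ⧸ Subgroup.center G) × (G ⧸ Subgroup.center G) → G := fun p =>
    Quotient.liftOn₂' p.1 p.2 (fun g h => ⁅g, h⁆) (fun g₁ h₁ g₂ h₂ hg hh =>
      key g₁ g₂ h₁ h₂ (Quotient.sound' hg) (Quotient.sound' hh))
  have hsub : commutatorSet G ⊆ Set.range f := by
    rintro x ⟨g, hg, rfl⟩
    exact ⟨(↑g, ↑hg), rfl⟩
  haveI : Finite (commutatorSet G) :=
    ((Set.finite_range f).subset hsub).to_subtype
  infer_instance
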